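/- Let d ≥ 1, let W₂, W₃, W₄ be d×d complex positive semidefinite matrices and let v, w be real numbers. Then the matrix v²·tr(W₂·(I+W₃))·W₄ + w²·tr(W₄·(I+W₃))·W₂ + v·w·(W₄·(I+W₃)·W₂ + W₂·(I+W₃)·W₄) is positive semidefinite. -/

import Mathlib

open scoped ComplexOrder

open Matrix Finset

private lemma aux_dot {d : ℕ} (M N : Matrix (Fin d) (Fin d) ℂ) (x y : Fin d → ℂ) :
    star (M *ᵥ x) ⬝ᵥ (N *ᵥ y) = star x ⬝ᵥ ((Mᴴ * N) *ᵥ y) := by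
  rw [star_mulVec, dotProduct_mulVec, vecMul_vecMul, dotProduct_mulVec]

private lemma aux_norm {d : ℕ} (y : Fin d → ℂ) :
    star y ⬝ᵥ y = ((∑ i, ‖y i‖ ^ 2 : ℝ) : ℂ) := by
  push_cast
  simp only [dotProduct, Pi.star_apply]
  refine Finset.sum_congr rfl fun i _ => ?_
  rw [Complex.star_def, mul_comm, Complex.mul_conj, ← Complex.sq_norm]
  norm_cast

private lemma aux_CS {d : ℕ} (R : Matrix (Fin d) (Fin d) ℂ) (u : Fin d → ℂ) :
    ∑ i, ‖(R *ᵥ u) i‖ ^ 2 ≤ (∑ i, ∑ j, ‖R i j‖ ^ 2) * ∑ j, ‖u j‖ ^ 2 := by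
  rw [Finset.sum_mul]
  refine Finset.sum_le_sum fun i _ => ?_
  calc ‖(R *ᵥ u) i‖ ^ 2 ≤ (∑ j, ‖R i j‖ * ‖u j‖) ^ 2 := by
        apply pow_le_pow_left₀ (norm_nonneg _)
        calc ‖(R *ᵥ u) i‖ = ‖∑ j, R i j * u j‖ := by simp [Matrix.mulVec, dotProduct]
        _ ≤ ∑ j, ‖R i j * u j‖ := norm_sum_le _ _
        _ = ∑ j, ‖R i j‖ * ‖u j‖ := by simp [norm_mul]
    _ ≤ (∑ j, ‖R i j‖ ^ 2) * ∑ j, ‖u j‖ ^ 2 :=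
        Finset.sum_mul_sq_le_sq_mul_sq _ _ _

private lemma aux_trace {d : ℕ} (R : Matrix (Fin d) (Fin d) ℂ) :
    (Rᴴ * R).trace = ((∑ i, ∑ j, ‖R i j‖ ^ 2 : ℝ) : ℂ) := by
  rw [Finset.sum_comm]
  push_cast
  simp only [Matrix.trace, Matrix.diag, Matrix.mul_apply, Matrix.conjTranspose_apply]
  refine Finset.sum_congr rfl fun i _ => Finset.sum_congr rfl fun j _ => ?_
  rw [Complex.star_def, mul_comm, Complex.mul_conj, ← Complex.sq_norm]
  norm_cast

private lemma aux_final (F₂ F₄ N₂ N₄ r v w : ℝ) (hF₂0 : 0 ≤ F₂) (hF₄0 : 0 ≤ F₄)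
    (hN₂0 : 0 ≤ N₂) (hN₄0 : 0 ≤ N₄)
    (habs : |r| ≤ Real.sqrt (F₂ * N₄) * Real.sqrt (F₄ * N₂)) :
    0 ≤ v ^ 2 * F₂ * N₄ + w ^ 2 * F₄ * N₂ + v * w * (2 * r) := by
  set s : ℝ := Real.sqrt (F₂ * N₄) with hs
  set t : ℝ := Real.sqrt (F₄ * N₂) with ht
  have hs2 : s ^ 2 = F₂ * N₄ := Real.sq_sqrt (mul_nonneg hF₂0 hN₄0)
  have ht2 : t ^ 2 = F₄ * N₂ := Real.sq_sqrt (mul_nonneg hF₄0 hN₂0)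
  clear_value s t
  obtain ⟨hr1, hr2'⟩ := abs_le.mp habs
  rcases le_or_gt 0 (v * w) with hvw | hvw
  · have h1 : v * w * (-(s * t)) ≤ v * w * r := mul_le_mul_of_nonneg_left hr1 hvw
    nlinarith [sq_nonneg (v * s - w * t), hs2, ht2, h1]
  · have h1 : v * w * (s * t) ≤ v * w * r := mul_le_mul_of_nonpos_left hr2' hvw.le
    nlinarith [sq_nonneg (v * s + w * t), hs2, ht2, h1]

theorem gain_term_posSemidef (d : ℕ) (hd : 1 ≤ d)
    (W₂ W₃ W₄ : Matrix (Fin d) (Fin d) ℂ)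
    (h₂ : W₂.PosSemidef) (h₃ : W₃.PosSemidef) (h₄ : W₄.PosSemidef)
    (v w : ℝ) :
    (((v : ℂ)^2 * (W₂ * (1 + W₃)).trace) • W₄
      + ((w : ℂ)^2 * (W₄ * (1 + W₃)).trace) • W₂
      + ((v : ℂ) * (w : ℂ)) • (W₄ * (1 + W₃) * W₂ + W₂ * (1 + W₃) * W₄)).PosSemidef := by
  have hB : (1 + W₃ : Matrix (Fin d) (Fin d) ℂ).PosSemidef := Matrix.PosSemidef.one.add h₃
  obtain ⟨a, haH, haa⟩ : ∃ a : Matrix (Fin d) (Fin d) ℂ, aᴴ = a ∧ a * a = W₄ :=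
    by open scoped MatrixOrder in exact ⟨CFC.sqrt W₄, (CFC.sqrt_nonneg W₄).posSemidef.1, CFC.sqrt_mul_sqrt_self W₄ h₄.nonneg⟩
  obtain ⟨c, hcH, hcc⟩ : ∃ c : Matrix (Fin d) (Fin d) ℂ, cᴴ = c ∧ c * c = W₂ :=
    by open scoped MatrixOrder in exact ⟨CFC.sqrt W₂, (CFC.sqrt_nonneg W₂).posSemidef.1, CFC.sqrt_mul_sqrt_self W₂ h₂.nonneg⟩
  obtain ⟨b, hbH, hbb⟩ : ∃ b : Matrix (Fin d) (Fin d) ℂ, bᴴ = b ∧ b * b = 1 + W₃ :=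
    by open scoped MatrixOrder in exact ⟨CFC.sqrt (1 + W₃), (CFC.sqrt_nonneg (1 + W₃)).posSemidef.1, CFC.sqrt_mul_sqrt_self (1 + W₃) hB.nonneg⟩
  set F₄ : ℝ := ∑ i, ∑ j, ‖(b * a) i j‖ ^ 2 with hF₄
  set F₂ : ℝ := ∑ i, ∑ j, ‖(b * c) i j‖ ^ 2 with hF₂
  have hF₄0 : 0 ≤ F₄ := Finset.sum_nonneg fun _ _ =>
    Finset.sum_nonneg fun _ _ => sq_nonneg _
  have hF₂0 : 0 ≤ F₂ := Finset.sum_nonneg fun _ _ =>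
    Finset.sum_nonneg fun _ _ => sq_nonneg _
  have ht₄ : (W₄ * (1 + W₃)).trace = ((F₄ : ℝ) : ℂ) := by
    rw [← aux_trace (b * a)]
    have h1 : (b * a)ᴴ * (b * a) = a * ((1 + W₃) * a) := by
      rw [conjTranspose_mul, haH, hbH,
        show a * b * (b * a) = a * ((b * b) * a) by simp only [Matrix.mul_assoc], hbb]
    rw [h1, ← Matrix.mul_assoc, Matrix.trace_mul_comm (a * (1 + W₃)) a,
      ← Matrix.mul_assoc, haa]
  have ht₂ : (W₂ * (1 + W₃)).trace = ((F₂ : ℝ) : ℂ) := by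
    rw [← aux_trace (b * c)]
    have h1 : (b * c)ᴴ * (b * c) = c * ((1 + W₃) * c) := by
      rw [conjTranspose_mul, hcH, hbH,
        show c * b * (b * c) = c * ((b * b) * c) by simp only [Matrix.mul_assoc], hbb]
    rw [h1, ← Matrix.mul_assoc, Matrix.trace_mul_comm (c * (1 + W₃)) c,
      ← Matrix.mul_assoc, hcc]
  rw [ht₂, ht₄]
  refine Matrix.PosSemidef.of_dotProduct_mulVec_nonneg ?_ ?_
  · -- Hermitian
    show _ᴴ = _
    simp only [conjTranspose_add, conjTranspose_smul, conjTranspose_mul, conjTranspose_one,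
      h₂.1.eq, h₃.1.eq, h₄.1.eq, Complex.star_def, map_pow, Complex.conj_ofReal, _root_.map_mul,
      Matrix.mul_assoc]
    rw [add_comm (W₂ * ((1 + W₃) * W₄)) (W₄ * ((1 + W₃) * W₂))]
  · intro x
    set u₄ : Fin d → ℂ := a *ᵥ x with hu₄
    set u₂ : Fin d → ℂ := c *ᵥ x with hu₂
    set Y : Fin d → ℂ := (b * a) *ᵥ u₄ with hY
    set Z : Fin d → ℂ := (b * c) *ᵥ u₂ with hZ
    set N₄ : ℝ := ∑ i, ‖u₄ i‖ ^ 2 with hN₄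
    set N₂ : ℝ := ∑ i, ‖u₂ i‖ ^ 2 with hN₂
    have hN₄0 : 0 ≤ N₄ := Finset.sum_nonneg fun _ _ => sq_nonneg _
    have hN₂0 : 0 ≤ N₂ := Finset.sum_nonneg fun _ _ => sq_nonneg _
    have e₄ : star x ⬝ᵥ (W₄ *ᵥ x) = ((N₄ : ℝ) : ℂ) := by
      rw [show W₄ = aᴴ * a by rw [haH, haa], ← aux_dot, ← hu₄, aux_norm]
    have e₂ : star x ⬝ᵥ (W₂ *ᵥ x) = ((N₂ : ℝ) : ℂ) := by
      rw [show W₂ = cᴴ * c by rw [hcH, hcc], ← aux_dot, ← hu₂, aux_norm]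
    have eYZ : star x ⬝ᵥ ((W₄ * (1 + W₃) * W₂) *ᵥ x) = star Y ⬝ᵥ Z := by
      rw [hY, hZ, hu₄, hu₂, mulVec_mulVec, mulVec_mulVec, aux_dot]
      congr 2
      rw [conjTranspose_mul, conjTranspose_mul, haH, hbH,
        show a * (a * b) * (b * c * c) = (a * a) * (b * b) * (c * c) by
          simp only [Matrix.mul_assoc],
        haa, hbb, hcc, Matrix.mul_assoc]
    have eZY : star x ⬝ᵥ ((W₂ * (1 + W₃) * W₄) *ᵥ x) = star Z ⬝ᵥ Y := by
      rw [hY, hZ, hu₄, hu₂, mulVec_mulVec, mulVec_mulVec, aux_dot]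
      congr 2
      rw [conjTranspose_mul, conjTranspose_mul, hcH, hbH,
        show c * (c * b) * (b * a * a) = (c * c) * (b * b) * (a * a) by
          simp only [Matrix.mul_assoc],
        hcc, hbb, haa, Matrix.mul_assoc]
    set r : ℝ := (star Y ⬝ᵥ Z).re with hr
    have ecross : star Y ⬝ᵥ Z + star Z ⬝ᵥ Y = (((2 * r) : ℝ) : ℂ) := by
      have h1 : star Z ⬝ᵥ Y = star (star Y ⬝ᵥ Z) := by
        rw [star_dotProduct]
      rw [h1, Complex.star_def, Complex.add_conj]
    -- norms of Y and Z
    set NY : ℝ := ∑ i, ‖Y i‖ ^ 2 with hNY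
    set NZ : ℝ := ∑ i, ‖Z i‖ ^ 2 with hNZ
    have hYb : NY ≤ F₄ * N₄ := aux_CS (b * a) u₄
    have hZb : NZ ≤ F₂ * N₂ := aux_CS (b * c) u₂
    have hNY0 : 0 ≤ NY := Finset.sum_nonneg fun _ _ => sq_nonneg _
    have hNZ0 : 0 ≤ NZ := Finset.sum_nonneg fun _ _ => sq_nonneg _
    -- Cauchy-Schwarz for the cross term
    have habs : |r| ≤ Real.sqrt (F₂ * N₄) * Real.sqrt (F₄ * N₂) := by
      have hS : |r| ≤ ∑ i, ‖Y i‖ * ‖Z i‖ := by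
        rw [hr]
        have : (star Y ⬝ᵥ Z).re = ∑ i, ((star Y) i * Z i).re := by
          rw [dotProduct, Complex.re_sum]
        rw [this]
        calc |∑ i, ((star Y) i * Z i).re| ≤ ∑ i, |((star Y) i * Z i).re| :=
              Finset.abs_sum_le_sum_abs _ _
          _ ≤ ∑ i, ‖Y i‖ * ‖Z i‖ := by
              refine Finset.sum_le_sum fun i _ => ?_
              calc |((star Y) i * Z i).re| ≤ ‖(star Y) i * Z i‖ :=
                    Complex.abs_re_le_norm _
                _ = ‖Y i‖ * ‖Z i‖ := by
                    simp [_root_.map_mul, Pi.star_apply, Complex.norm_conj]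
      have hS2 : (∑ i, ‖Y i‖ * ‖Z i‖) ^ 2 ≤ NY * NZ :=
        Finset.sum_mul_sq_le_sq_mul_sq _ _ _
      have hr2 : r ^ 2 ≤ (Real.sqrt (F₂ * N₄) * Real.sqrt (F₄ * N₂)) ^ 2 := by
        have h3 : NY * NZ ≤ (F₄ * N₄) * (F₂ * N₂) :=
          mul_le_mul hYb hZb hNZ0 (mul_nonneg hF₄0 hN₄0)
        have h4 : (Real.sqrt (F₂ * N₄) * Real.sqrt (F₄ * N₂)) ^ 2
            = (F₄ * N₄) * (F₂ * N₂) := by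
          rw [mul_pow, Real.sq_sqrt (mul_nonneg hF₂0 hN₄0),
            Real.sq_sqrt (mul_nonneg hF₄0 hN₂0)]
          ring
        calc r ^ 2 = |r| ^ 2 := (sq_abs r).symm
          _ ≤ (∑ i, ‖Y i‖ * ‖Z i‖) ^ 2 := by
              apply pow_le_pow_left₀ (abs_nonneg _) hS
          _ ≤ NY * NZ := hS2
          _ ≤ (F₄ * N₄) * (F₂ * N₂) := h3
          _ = _ := h4.symm
      calc |r| = Real.sqrt (r ^ 2) := (Real.sqrt_sq_eq_abs r).symm
        _ ≤ Real.sqrt ((Real.sqrt (F₂ * N₄) * Real.sqrt (F₄ * N₂)) ^ 2) :=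
            Real.sqrt_le_sqrt hr2
        _ = Real.sqrt (F₂ * N₄) * Real.sqrt (F₄ * N₂) :=
            Real.sqrt_sq (mul_nonneg (Real.sqrt_nonneg _) (Real.sqrt_nonneg _))
    -- expand the quadratic form
    simp only [add_mulVec, smul_mulVec, dotProduct_add, dotProduct_smul, smul_eq_mul]
    rw [e₄, e₂, eYZ, eZY, ecross]
    have hcast : (v : ℂ) ^ 2 * ((F₂ : ℝ) : ℂ) * ((N₄ : ℝ) : ℂ)
        + (w : ℂ) ^ 2 * ((F₄ : ℝ) : ℂ) * ((N₂ : ℝ) : ℂ)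
        + (v : ℂ) * (w : ℂ) * (((2 * r : ℝ)) : ℂ)
        = ((v ^ 2 * F₂ * N₄ + w ^ 2 * F₄ * N₂ + v * w * (2 * r) : ℝ) : ℂ) := by
      push_cast
      ring
    rw [hcast, Complex.zero_le_real]
    exact aux_final F₂ F₄ N₂ N₄ r v w hF₂0 hF₄0 hN₂0 hN₄0 habs
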